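/- Let ε ∈ (0, 1/2), σ_w² > 0, 0 ≤ P_min < P_max, p_j ∈ [0,1], and P_a > 0 be reals, and let μ = (1−p_j)·δ_{σ_w²} + p_j·Unif[σ_w² + P_min, σ_w² + P_max]. Then the covertness constraint ξ* ≥ 1 − ε, where ξ* = 1 − sup_{γ∈ℝ} μ([γ − P_a, γ)), holds if and only if all three of the following hold: p_j ≥ 1 − ε, P_max − P_min ≥ (p_j/ε)·P_a, and (p_j/(1−ε) − 1)·P_max + P_min ≥ (p_j/(1−ε))·P_a. -/

import Mathlib

open MeasureTheory Set

private lemma conv_aux (pj L x : ℝ) (hpj : 0 ≤ pj) (hL : 0 < L) :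
    ENNReal.ofReal pj * ((ENNReal.ofReal L)⁻¹ * ENNReal.ofReal x)
      = ENNReal.ofReal (pj * max x 0 / L) := by
  have hx : ENNReal.ofReal x = ENNReal.ofReal (max x 0) := by
    rcases le_total x 0 with h | h
    · simp [ENNReal.ofReal_eq_zero.2 h, max_eq_right h]
    · simp [max_eq_left h]
  rw [hx, ← ENNReal.ofReal_inv_of_pos hL,
    ← ENNReal.ofReal_mul (by positivity), ← ENNReal.ofReal_mul hpj]
  congr 1
  field_simp

private lemma real_fwd (ε Pmin Pmax pj Pa : ℝ)
    (hε0 : 0 < ε) (hε1 : ε < 1/2) (hPmin : 0 ≤ Pmin) (hlt : Pmin < Pmax)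
    (hpj0 : 0 ≤ pj) (hpj1 : pj ≤ 1) (hPa : 0 < Pa)
    (h1 : 1 - pj + pj * max (min Pa Pmax - Pmin) 0 / (Pmax - Pmin) ≤ ε)
    (h2 : pj * max (min Pa (Pmax - Pmin)) 0 / (Pmax - Pmin) ≤ ε) :
    1 - ε ≤ pj ∧ pj / ε * Pa ≤ Pmax - Pmin ∧
      pj / (1 - ε) * Pa ≤ (pj / (1 - ε) - 1) * Pmax + Pmin := by
  have hL : 0 < Pmax - Pmin := by linarith
  have h1e : 0 < 1 - ε := by linarith
  have hmax1 : 0 ≤ pj * max (min Pa Pmax - Pmin) 0 / (Pmax - Pmin) := by positivity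
  have c1 : 1 - ε ≤ pj := by linarith
  have hpjpos : 0 < pj := by linarith
  have hminpos : 0 < min Pa (Pmax - Pmin) := lt_min hPa hL
  rw [max_eq_left hminpos.le] at h2
  have h2' : pj * min Pa (Pmax - Pmin) ≤ ε * (Pmax - Pmin) := by
    rw [div_le_iff₀ hL] at h2; linarith
  have c2 : pj / ε * Pa ≤ Pmax - Pmin := by
    rcases min_cases Pa (Pmax - Pmin) with ⟨hmin, hc⟩ | ⟨hmin, hc⟩
    · rw [hmin] at h2'
      rw [div_mul_eq_mul_div, div_le_iff₀ hε0]
      linarith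
    · rw [hmin] at h2'
      have hpe : pj ≤ ε := by nlinarith
      linarith
  refine ⟨c1, c2, ?_⟩
  have key : pj * Pa ≤ (pj - (1 - ε)) * Pmax + (1 - ε) * Pmin := by
    rcases le_or_gt Pmax Pa with hP | hP
    · exfalso
      rw [min_eq_right hP, max_eq_left hL.le, mul_div_assoc,
        div_self hL.ne'] at h1
      linarith
    · rw [min_eq_left hP.le] at h1
      rcases le_or_gt Pa Pmin with hPP | hPP
      · rw [max_eq_right (by linarith)] at h1
        nlinarith [mul_nonneg (sub_nonneg.2 c1) (sub_nonneg.2 hlt.le),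
          mul_le_mul_of_nonneg_left hPP hpjpos.le]
      · rw [max_eq_left (by linarith)] at h1
        have h1' : pj * (Pa - Pmin) ≤ (ε - (1 - pj)) * (Pmax - Pmin) := by
          rw [← div_le_iff₀ hL]
          linarith [h1]
        nlinarith [h1']
  have hc : pj / (1 - ε) * (1 - ε) = pj := div_mul_cancel₀ pj h1e.ne'
  rw [div_mul_eq_mul_div, div_le_iff₀ h1e]
  nlinarith [key, hc]

private lemma real_bwd (ε Pmin Pmax pj Pa : ℝ)
    (hε0 : 0 < ε) (hε1 : ε < 1/2) (hPmin : 0 ≤ Pmin) (hlt : Pmin < Pmax)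
    (hpj0 : 0 ≤ pj) (hpj1 : pj ≤ 1) (hPa : 0 < Pa)
    (c1 : 1 - ε ≤ pj) (c2 : pj / ε * Pa ≤ Pmax - Pmin)
    (c3 : pj / (1 - ε) * Pa ≤ (pj / (1 - ε) - 1) * Pmax + Pmin) :
    1 - pj + pj * max (min Pa Pmax - Pmin) 0 / (Pmax - Pmin) ≤ ε ∧
      pj * Pa / (Pmax - Pmin) ≤ ε := by
  have hL : 0 < Pmax - Pmin := by linarith
  have h1e : 0 < 1 - ε := by linarith
  have hpjpos : 0 < pj := by linarith
  have hc : pj / (1 - ε) * (1 - ε) = pj := div_mul_cancel₀ pj h1e.ne'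
  have key : pj * Pa ≤ (pj - (1 - ε)) * Pmax + (1 - ε) * Pmin := by
    rw [div_mul_eq_mul_div, div_le_iff₀ h1e] at c3
    nlinarith [c3, hc]
  have b2 : pj * Pa / (Pmax - Pmin) ≤ ε := by
    rw [div_mul_eq_mul_div, div_le_iff₀ hε0] at c2
    rw [div_le_iff₀ hL]
    linarith
  refine ⟨?_, b2⟩
  have hPam : Pa < Pmax := by nlinarith
  rw [min_eq_left hPam.le]
  rcases le_or_gt Pa Pmin with hPP | hPP
  · rw [max_eq_right (by linarith)]
    simp only [mul_zero, zero_div]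
    linarith
  · rw [max_eq_left (by linarith)]
    have : pj * (Pa - Pmin) / (Pmax - Pmin) ≤ ε - (1 - pj) := by
      rw [div_le_iff₀ hL]
      nlinarith [key]
    linarith

theorem covertness_constraint_iff
    (ε σw Pmin Pmax pj Pa : ℝ)
    (hε0 : 0 < ε) (hε1 : ε < 1/2)
    (hσw : 0 < σw) (hPmin : 0 ≤ Pmin) (hlt : Pmin < Pmax)
    (hpj0 : 0 ≤ pj) (hpj1 : pj ≤ 1) (hPa : 0 < Pa)
    (μ : Measure ℝ)
    (hμ : μ = ENNReal.ofReal (1 - pj) • Measure.dirac σw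
        + ENNReal.ofReal pj •
          ((ENNReal.ofReal (Pmax - Pmin))⁻¹ •
            volume.restrict (Icc (σw + Pmin) (σw + Pmax)))) :
    (ENNReal.ofReal (1 - ε) ≤ 1 - ⨆ γ : ℝ, μ (Ico (γ - Pa) γ)) ↔
      (1 - ε ≤ pj ∧
        pj / ε * Pa ≤ Pmax - Pmin ∧
        pj / (1 - ε) * Pa ≤ (pj / (1 - ε) - 1) * Pmax + Pmin) := by
  have hL : (0:ℝ) < Pmax - Pmin := sub_pos.2 hlt
  have h1e : (0:ℝ) < 1 - ε := by linarith
  have happ : ∀ γ : ℝ, μ (Ico (γ - Pa) γ) =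
      ENNReal.ofReal (1 - pj) * (Ico (γ - Pa) γ).indicator (1 : ℝ → ENNReal) σw
        + ENNReal.ofReal pj * ((ENNReal.ofReal (Pmax - Pmin))⁻¹
            * volume (Ico (γ - Pa) γ ∩ Icc (σw + Pmin) (σw + Pmax))) := by
    intro γ
    rw [hμ]
    simp [Measure.add_apply, Measure.smul_apply, smul_eq_mul,
      Measure.dirac_apply' _ measurableSet_Ico,
      Measure.restrict_apply measurableSet_Ico, mul_assoc]
  have huniv : μ univ = 1 := by
    rw [hμ]
    simp [Measure.add_apply, Measure.smul_apply, smul_eq_mul,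
      Measure.restrict_apply MeasurableSet.univ, Real.volume_Icc]
    rw [ENNReal.inv_mul_cancel (by simp [ENNReal.ofReal_eq_zero]; linarith)
        ENNReal.ofReal_ne_top,
      mul_one, ← ENNReal.ofReal_add (by linarith) hpj0]
    norm_num
  have hS1 : (⨆ γ : ℝ, μ (Ico (γ - Pa) γ)) ≤ 1 :=
    iSup_le fun γ => huniv ▸ measure_mono (subset_univ _)
  have hoe : ENNReal.ofReal (1 - ε) = 1 - ENNReal.ofReal ε := by
    rw [ENNReal.ofReal_sub _ hε0.le, ENNReal.ofReal_one]
  have hmain : (⨆ γ : ℝ, μ (Ico (γ - Pa) γ)) ≤ ENNReal.ofReal ε ↔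
      (1 - ε ≤ pj ∧ pj / ε * Pa ≤ Pmax - Pmin ∧
        pj / (1 - ε) * Pa ≤ (pj / (1 - ε) - 1) * Pmax + Pmin) := by
    constructor
    · intro hsup
      -- instantiation at γ = σw + Pa
      have i1 : μ (Ico (σw + Pa - Pa) (σw + Pa)) ≤ ENNReal.ofReal ε :=
        le_trans (le_iSup (fun γ => μ (Ico (γ - Pa) γ)) (σw + Pa)) hsup
      have lb1 : ENNReal.ofReal ((1 - pj) + pj * max (min Pa Pmax - Pmin) 0 / (Pmax - Pmin))
          ≤ μ (Ico (σw + Pa - Pa) (σw + Pa)) := by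
        have hmem : σw ∈ Ico (σw + Pa - Pa) (σw + Pa) := ⟨by linarith, by linarith⟩
        have hvol : ENNReal.ofReal (min Pa Pmax - Pmin)
            ≤ volume (Ico (σw + Pa - Pa) (σw + Pa) ∩ Icc (σw + Pmin) (σw + Pmax)) := by
          have hsub : Ico (σw + Pmin) (σw + min Pa Pmax)
              ⊆ Ico (σw + Pa - Pa) (σw + Pa) ∩ Icc (σw + Pmin) (σw + Pmax) := by
            intro x hx
            obtain ⟨hx1, hx2⟩ := hx
            have hm1 : σw + min Pa Pmax ≤ σw + Pa := by
              have := min_le_left Pa Pmax; linarith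
            have hm2 : σw + min Pa Pmax ≤ σw + Pmax := by
              have := min_le_right Pa Pmax; linarith
            exact ⟨⟨by linarith, by linarith⟩, hx1, by linarith⟩
          calc ENNReal.ofReal (min Pa Pmax - Pmin)
              = volume (Ico (σw + Pmin) (σw + min Pa Pmax)) := by
                rw [Real.volume_Ico]; congr 1; ring
            _ ≤ _ := measure_mono hsub
        rw [happ, Set.indicator_of_mem hmem, Pi.one_apply, mul_one,
          ENNReal.ofReal_add (by linarith) (by positivity),
          ← conv_aux pj _ (min Pa Pmax - Pmin) hpj0 hL]
        exact add_le_add_right (mul_le_mul_right (mul_le_mul_right hvol _) _) _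
      have h1 : 1 - pj + pj * max (min Pa Pmax - Pmin) 0 / (Pmax - Pmin) ≤ ε :=
        (ENNReal.ofReal_le_ofReal_iff hε0.le).1 (lb1.trans i1)
      -- instantiation at γ = σw + Pmin + min Pa (Pmax - Pmin)
      have i2 : μ (Ico (σw + Pmin + min Pa (Pmax - Pmin) - Pa)
            (σw + Pmin + min Pa (Pmax - Pmin))) ≤ ENNReal.ofReal ε :=
        le_trans (le_iSup (fun γ => μ (Ico (γ - Pa) γ))
          (σw + Pmin + min Pa (Pmax - Pmin))) hsup
      have lb2 : ENNReal.ofReal (pj * max (min Pa (Pmax - Pmin)) 0 / (Pmax - Pmin))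
          ≤ μ (Ico (σw + Pmin + min Pa (Pmax - Pmin) - Pa)
            (σw + Pmin + min Pa (Pmax - Pmin))) := by
        have hvol : ENNReal.ofReal (min Pa (Pmax - Pmin))
            ≤ volume (Ico (σw + Pmin + min Pa (Pmax - Pmin) - Pa)
                (σw + Pmin + min Pa (Pmax - Pmin)) ∩ Icc (σw + Pmin) (σw + Pmax)) := by
          have hsub : Ico (σw + Pmin) (σw + Pmin + min Pa (Pmax - Pmin))
              ⊆ Ico (σw + Pmin + min Pa (Pmax - Pmin) - Pa)
                  (σw + Pmin + min Pa (Pmax - Pmin)) ∩ Icc (σw + Pmin) (σw + Pmax) := by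
            intro x hx
            obtain ⟨hx1, hx2⟩ := hx
            have hm1 : min Pa (Pmax - Pmin) ≤ Pa := min_le_left _ _
            have hm2 : min Pa (Pmax - Pmin) ≤ Pmax - Pmin := min_le_right _ _
            exact ⟨⟨by linarith, hx2⟩, hx1, by linarith⟩
          calc ENNReal.ofReal (min Pa (Pmax - Pmin))
              = volume (Ico (σw + Pmin) (σw + Pmin + min Pa (Pmax - Pmin))) := by
                rw [Real.volume_Ico]; congr 1; ring
            _ ≤ _ := measure_mono hsub
        rw [happ, ← conv_aux pj _ (min Pa (Pmax - Pmin)) hpj0 hL]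
        exact le_trans (mul_le_mul_right (mul_le_mul_right hvol _) _)
          (le_add_of_nonneg_left zero_le)
      have h2 : pj * max (min Pa (Pmax - Pmin)) 0 / (Pmax - Pmin) ≤ ε :=
        (ENNReal.ofReal_le_ofReal_iff hε0.le).1 (lb2.trans i2)
      exact real_fwd ε Pmin Pmax pj Pa hε0 hε1 hPmin hlt hpj0 hpj1 hPa h1 h2
    · rintro ⟨c1, c2, c3⟩
      obtain ⟨b1, b2⟩ := real_bwd ε Pmin Pmax pj Pa hε0 hε1 hPmin hlt hpj0 hpj1 hPa c1 c2 c3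
      refine iSup_le fun γ => ?_
      rw [happ γ]
      by_cases hmem : σw ∈ Ico (γ - Pa) γ
      · have hγ : γ ≤ σw + Pa := by have := hmem.1; linarith
        have hvol : volume (Ico (γ - Pa) γ ∩ Icc (σw + Pmin) (σw + Pmax))
            ≤ ENNReal.ofReal (min Pa Pmax - Pmin) := by
          have hsub : Ico (γ - Pa) γ ∩ Icc (σw + Pmin) (σw + Pmax)
              ⊆ Icc (σw + Pmin) (σw + min Pa Pmax) := by
            rintro x ⟨⟨hx1, hx2⟩, hx3, hx4⟩
            refine ⟨hx3, ?_⟩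
            have hxm : x ≤ min (σw + Pa) (σw + Pmax) := le_min (by linarith) hx4
            rwa [min_add_add_left] at hxm
          calc volume (Ico (γ - Pa) γ ∩ Icc (σw + Pmin) (σw + Pmax))
              ≤ volume (Icc (σw + Pmin) (σw + min Pa Pmax)) := measure_mono hsub
            _ = ENNReal.ofReal (min Pa Pmax - Pmin) := by
                rw [Real.volume_Icc]; congr 1; ring
        rw [Set.indicator_of_mem hmem, Pi.one_apply, mul_one]
        calc ENNReal.ofReal (1 - pj)
              + ENNReal.ofReal pj * ((ENNReal.ofReal (Pmax - Pmin))⁻¹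
                * volume (Ico (γ - Pa) γ ∩ Icc (σw + Pmin) (σw + Pmax)))
            ≤ ENNReal.ofReal (1 - pj)
              + ENNReal.ofReal pj * ((ENNReal.ofReal (Pmax - Pmin))⁻¹
                * ENNReal.ofReal (min Pa Pmax - Pmin)) :=
              add_le_add_right (mul_le_mul_right (mul_le_mul_right hvol _) _) _
          _ = ENNReal.ofReal (1 - pj
              + pj * max (min Pa Pmax - Pmin) 0 / (Pmax - Pmin)) := by
              rw [conv_aux pj _ _ hpj0 hL,
                ENNReal.ofReal_add (by linarith) (by positivity)]
          _ ≤ ENNReal.ofReal ε := ENNReal.ofReal_le_ofReal b1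
      · have hvol : volume (Ico (γ - Pa) γ ∩ Icc (σw + Pmin) (σw + Pmax))
            ≤ ENNReal.ofReal Pa := by
          calc volume (Ico (γ - Pa) γ ∩ Icc (σw + Pmin) (σw + Pmax))
              ≤ volume (Ico (γ - Pa) γ) := measure_mono inter_subset_left
            _ = ENNReal.ofReal Pa := by rw [Real.volume_Ico]; congr 1; ring
        rw [Set.indicator_of_notMem hmem, mul_zero, zero_add]
        calc ENNReal.ofReal pj * ((ENNReal.ofReal (Pmax - Pmin))⁻¹
                * volume (Ico (γ - Pa) γ ∩ Icc (σw + Pmin) (σw + Pmax)))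
            ≤ ENNReal.ofReal pj * ((ENNReal.ofReal (Pmax - Pmin))⁻¹
                * ENNReal.ofReal Pa) := mul_le_mul_right (mul_le_mul_right hvol _) _
          _ = ENNReal.ofReal (pj * Pa / (Pmax - Pmin)) := by
              rw [conv_aux pj _ _ hpj0 hL, max_eq_left hPa.le]
          _ ≤ ENNReal.ofReal ε := ENNReal.ofReal_le_ofReal b2
  constructor
  · intro h
    apply hmain.1
    have h2 : 1 - (1 - ⨆ γ : ℝ, μ (Ico (γ - Pa) γ))
        ≤ 1 - ENNReal.ofReal (1 - ε) := tsub_le_tsub_left h 1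
    have hε1' : ENNReal.ofReal ε ≤ 1 := ENNReal.ofReal_le_one.2 (by linarith)
    rwa [ENNReal.sub_sub_cancel ENNReal.one_ne_top hS1, hoe,
      ENNReal.sub_sub_cancel ENNReal.one_ne_top hε1'] at h2
  · intro h
    rw [hoe]
    exact tsub_le_tsub_left (hmain.2 h) 1
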